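/- Let n ≥ 1 and let (z,t) ∈ ℂⁿ×ℝ with z ≠ 0. Then both of the following integrals converge absolutely and ∫₀^∞ h^{−1/2} p_h(z,t) dh = (Γ(n+1/2)/(4π^{n+1})) · ∫_ℝ (λ/sinh λ)^n · (λ‖z‖² coth λ − iλt)^{−(n+1/2)} dλ, where the complex power is the principal branch (the base has positive real part for λ ≠ 0 and equals ‖z‖² > 0 in the limit λ → 0, with (λ/sinh λ)^n and λ coth λ extended by 1 at λ = 0). -/

import Mathlib

open MeasureTheory Topology Filter Set

noncomputable section

/-- `λ coth λ`, extended by `1` at `λ = 0`. -/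
def lcoth (l : ℝ) : ℝ := if l = 0 then 1 else l * Real.cosh l / Real.sinh l

/-- `λ / sinh λ`, extended by `1` at `λ = 0`. -/
def lsinh (l : ℝ) : ℝ := if l = 0 then 1 else l / Real.sinh l

/-- `‖z‖²` for `z ∈ ℂⁿ`. -/
def cnorm2 {n : ℕ} (z : Fin n → ℂ) : ℝ := ∑ i, Complex.normSq (z i)

/-- The Gaveau heat kernel on the Heisenberg group `ℍⁿ`:
`p_h(z,t) = (2(4πh)^{n+1})⁻¹ ∫_ℝ exp((λ/(4h))(it − ‖z‖² coth λ)) (λ/sinh λ)^n dλ`. -/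
def pheat (n : ℕ) (h : ℝ) (z : Fin n → ℂ) (t : ℝ) : ℂ :=
  ((2 * (4 * Real.pi * h) ^ (n + 1) : ℝ) : ℂ)⁻¹ *
    ∫ l : ℝ, Complex.exp (((4 * h : ℝ) : ℂ)⁻¹ *
        (Complex.I * l * t - ((cnorm2 z * lcoth l : ℝ) : ℂ))) * ((lsinh l : ℝ) : ℂ) ^ n


lemma sinh_le_mul_cosh {l : ℝ} (hl : 0 < l) : Real.sinh l ≤ l * Real.cosh l := by
  obtain ⟨x, hx, hx'⟩ := exists_hasDerivAt_eq_slope Real.sinh Real.cosh hl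
    Real.continuous_sinh.continuousOn (fun y _ => Real.hasDerivAt_sinh y)
  rw [Real.sinh_zero, sub_zero, sub_zero] at hx'
  have hxl : Real.cosh x ≤ Real.cosh l := by
    apply Real.cosh_le_cosh.2
    rw [abs_of_pos hx.1, abs_of_pos hl]
    exact hx.2.le
  have : Real.sinh l = Real.cosh x * l := by
    field_simp at hx'; linarith [hx']
  nlinarith

lemma lcoth_neg (l : ℝ) : lcoth (-l) = lcoth l := by
  unfold lcoth
  simp only [neg_eq_zero, Real.cosh_neg, Real.sinh_neg]
  rcases eq_or_ne l 0 with rfl | h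
  · simp
  · rw [if_neg h, if_neg h, neg_mul, neg_div_neg_eq]

lemma lsinh_neg (l : ℝ) : lsinh (-l) = lsinh l := by
  unfold lsinh
  simp only [neg_eq_zero, Real.sinh_neg]
  rcases eq_or_ne l 0 with rfl | h
  · simp
  · rw [if_neg h, if_neg h, neg_div_neg_eq]

lemma one_le_lcoth (l : ℝ) : 1 ≤ lcoth l := by
  have key : ∀ m : ℝ, 0 < m → 1 ≤ lcoth m := by
    intro m hm
    rw [lcoth, if_neg hm.ne']
    rw [le_div_iff₀ (Real.sinh_pos_iff.2 hm)]
    simpa using sinh_le_mul_cosh hm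
  rcases lt_trichotomy l 0 with h | rfl | h
  · rw [← lcoth_neg]; exact key _ (by linarith)
  · simp [lcoth]
  · exact key _ h

lemma lcoth_pos (l : ℝ) : 0 < lcoth l := lt_of_lt_of_le one_pos (one_le_lcoth l)

lemma lsinh_pos (l : ℝ) : 0 < lsinh l := by
  have key : ∀ m : ℝ, 0 < m → 0 < lsinh m := by
    intro m hm
    rw [lsinh, if_neg hm.ne']
    exact div_pos hm (Real.sinh_pos_iff.2 hm)
  rcases lt_trichotomy l 0 with h | rfl | h
  · rw [← lsinh_neg]; exact key _ (by linarith)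
  · simp [lsinh]
  · exact key _ h

lemma lsinh_le_one (l : ℝ) : lsinh l ≤ 1 := by
  have key : ∀ m : ℝ, 0 < m → lsinh m ≤ 1 := by
    intro m hm
    rw [lsinh, if_neg hm.ne']
    rw [div_le_one (Real.sinh_pos_iff.2 hm)]
    exact (Real.self_lt_sinh_iff.2 hm).le
  rcases lt_trichotomy l 0 with h | rfl | h
  · rw [← lsinh_neg]; exact key _ (by linarith)
  · simp [lsinh]
  · exact key _ h

lemma lsinh_le_exp (l : ℝ) : lsinh l ≤ 6 * Real.exp (-|l| / 2) := by
  have key : ∀ m : ℝ, 0 ≤ m → lsinh m ≤ 6 * Real.exp (-m / 2) := by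
    intro m hm
    rcases le_or_gt m 1 with h1 | h1
    · have e1 : Real.exp (1/2 : ℝ) ≤ Real.exp 1 := Real.exp_le_exp.2 (by norm_num)
      have e2 : Real.exp 1 < 2.7182818286 := Real.exp_one_lt_d9
      have e3 : Real.exp (-m/2) * Real.exp (m/2) = 1 := by
        rw [← Real.exp_add]; ring_nf; exact Real.exp_zero
      have e4 : Real.exp (m/2) ≤ Real.exp (1/2 : ℝ) := Real.exp_le_exp.2 (by linarith)
      have e5 := Real.exp_pos (-m/2)
      nlinarith [lsinh_le_one m]
    · have hm0 : m ≠ 0 := by linarith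
      rw [lsinh, if_neg hm0]
      have hsp : 0 < Real.sinh m := Real.sinh_pos_iff.2 (by linarith)
      rw [div_le_iff₀ hsp]
      have hsinh : Real.exp m / 3 ≤ Real.sinh m := by
        rw [Real.sinh_eq]
        have a1 : Real.exp (-m) * Real.exp m = 1 := by rw [← Real.exp_add]; simp
        have a2 : (2:ℝ) ≤ Real.exp m := by
          have := Real.add_one_le_exp m; linarith
        nlinarith
      have hl2 : m ≤ 2 * Real.exp (m/2) := by
        have := Real.add_one_le_exp (m/2); linarith
      have e4 : Real.exp (-m/2) * Real.exp m = Real.exp (m/2) := by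
        rw [← Real.exp_add]; ring_nf
      nlinarith [Real.exp_pos (-m/2), Real.exp_pos m]
  rcases le_or_gt 0 l with h | h
  · rw [abs_of_nonneg h]; exact key _ h
  · rw [abs_of_neg h, ← lsinh_neg]; exact key _ (by linarith)

lemma measurable_lsinh : Measurable lsinh := by
  unfold lsinh
  refine Measurable.ite ?_ measurable_const (measurable_id.div Real.continuous_sinh.measurable)
  exact measurableSet_singleton 0

lemma measurable_lcoth : Measurable lcoth := by
  unfold lcoth
  refine Measurable.ite ?_ measurable_const
    ((measurable_id.mul Real.continuous_cosh.measurable).div Real.continuous_sinh.measurable)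
  exact measurableSet_singleton 0

lemma integrable_exp_half_abs : Integrable (fun l : ℝ => Real.exp (-|l| / 2)) := by
  have hIoi : IntegrableOn (fun l : ℝ => Real.exp (-|l| / 2)) (Ioi 0) := by
    refine ((exp_neg_integrableOn_Ioi 0 (by norm_num : (0:ℝ) < 1/2))).congr_fun ?_ measurableSet_Ioi
    intro x hx
    show Real.exp (-(1/2) * x) = Real.exp (-|x| / 2)
    rw [abs_of_pos hx]; ring_nf
  have hind : Integrable ((Ioi (0:ℝ)).indicator fun l : ℝ => Real.exp (-|l| / 2)) :=
    (integrable_indicator_iff measurableSet_Ioi).2 hIoi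
  have hneg := hind.comp_neg
  have heq : (fun x : ℝ => (Ioi (0:ℝ)).indicator (fun l : ℝ => Real.exp (-|l| / 2)) (-x))
      = (Iio (0:ℝ)).indicator (fun l : ℝ => Real.exp (-|l| / 2)) := by
    funext x
    by_cases hx : x < 0
    · simp [Set.indicator_apply, mem_Ioi, mem_Iio, hx, neg_pos]
    · simp [Set.indicator_apply, mem_Ioi, mem_Iio, hx, neg_pos]
  rw [heq] at hneg
  have hIio : IntegrableOn (fun l : ℝ => Real.exp (-|l| / 2)) (Iio 0) :=
    (integrable_indicator_iff measurableSet_Iio).1 hneg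
  have : IntegrableOn (fun l : ℝ => Real.exp (-|l| / 2)) (Iio 0 ∪ Ici 0) := by
    apply hIio.union
    apply IntegrableOn.union (s := {(0:ℝ)}) (t := Ioi 0) ?_ hIoi |>.mono_set
    · intro x hx; rcases eq_or_lt_of_le (mem_Ici.1 hx) with h | h
      · exact Or.inl (by simp [← h])
      · exact Or.inr h
    · exact (integrableOn_singleton_iff (f := fun l : ℝ => Real.exp (-|l| / 2)) (x := 0)).2 (Or.inr (by simp))
  rw [← integrableOn_univ]
  apply this.mono_set
  intro x _
  rcases lt_or_ge x 0 with h | h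
  · exact Or.inl h
  · exact Or.inr h

lemma GIint {s : ℝ} (hs : 0 < s) {B : ℂ} (hB : 0 < B.re) :
    IntegrableOn (fun t : ℝ => ((t ^ (s - 1) : ℝ) : ℂ) * Complex.exp (-(B * t))) (Ioi 0) := by
  have hmeas : AEStronglyMeasurable
      (fun t : ℝ => ((t ^ (s - 1) : ℝ) : ℂ) * Complex.exp (-(B * t)))
      (volume.restrict (Ioi 0)) := by
    apply Measurable.aestronglyMeasurable
    fun_prop
  have hdom : IntegrableOn (fun t : ℝ => t ^ (s - 1) * Real.exp (-B.re * t)) (Ioi 0) := by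
    have := integrableOn_rpow_mul_exp_neg_mul_rpow
      (show (-1:ℝ) < s - 1 by linarith) zero_lt_one hB
    simpa [Real.rpow_one] using this
  refine Integrable.mono' hdom hmeas ?_
  rw [ae_restrict_iff' measurableSet_Ioi]
  filter_upwards with t ht
  rw [norm_mul, Complex.norm_real, Complex.norm_exp]
  have h1 : ‖t ^ (s - 1)‖ = t ^ (s - 1) := by
    rw [Real.norm_eq_abs, abs_of_nonneg (Real.rpow_nonneg (le_of_lt ht) _)]
  rw [h1]
  have h2 : (-(B * (t:ℂ))).re = -B.re * t := by
    simp [Complex.mul_re]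
  rw [h2]

lemma GIval {s : ℝ} (hs : 0 < s) {B : ℂ} (hB : 0 < B.re) :
    ∫ t in Ioi (0:ℝ), ((t ^ (s - 1) : ℝ) : ℂ) * Complex.exp (-(B * t)) =
      Complex.Gamma s * B ^ (-(s : ℂ)) := by
  set U : Set ℂ := {z : ℂ | 0 < z.re} with hU
  have hB' : B ∈ U := hB
  have hUo : IsOpen U := isOpen_lt continuous_const Complex.continuous_re
  set F : ℂ → ℂ := fun w => ∫ t in Ioi (0:ℝ), ((t ^ (s - 1) : ℝ) : ℂ) * Complex.exp (-(w * t))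
    with hF
  set G : ℂ → ℂ := fun w => Complex.Gamma s * w ^ (-(s : ℂ)) with hG
  -- G analytic on U
  have hGA : AnalyticOnNhd ℂ G U := by
    apply DifferentiableOn.analyticOnNhd _ hUo
    intro z hz
    apply DifferentiableAt.differentiableWithinAt
    exact ((Complex.hasStrictDerivAt_cpow_const
      (Complex.mem_slitPlane_iff.2 (Or.inl hz))).hasDerivAt.differentiableAt.const_mul _)
  -- F differentiable on U
  have hFA : AnalyticOnNhd ℂ F U := by
    apply DifferentiableOn.analyticOnNhd _ hUo
    intro z hz
    apply DifferentiableAt.differentiableWithinAt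
    have hz' : 0 < z.re := hz
    set ε : ℝ := z.re / 2 with hε
    have hε0 : 0 < ε := by positivity
    have key := hasDerivAt_integral_of_dominated_loc_of_deriv_le (μ := volume.restrict (Ioi 0))
      (F := fun (w : ℂ) (t : ℝ) => ((t ^ (s - 1) : ℝ) : ℂ) * Complex.exp (-(w * t)))
      (F' := fun (w : ℂ) (t : ℝ) =>
        ((t ^ (s - 1) : ℝ) : ℂ) * (Complex.exp (-(w * t)) * (-(t:ℂ))))
      (x₀ := z) (bound := fun t : ℝ => t ^ s * Real.exp (-ε * t)) (Metric.ball_mem_nhds z hε0)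
      ?_ ?_ ?_ ?_ ?_ ?_
    · exact HasDerivAt.differentiableAt key.2
    · filter_upwards with w
      apply Measurable.aestronglyMeasurable
      fun_prop
    · exact GIint hs hz'
    · apply Measurable.aestronglyMeasurable
      fun_prop
    · rw [ae_restrict_iff' measurableSet_Ioi]
      filter_upwards with t ht w hw
      have htp : (0:ℝ) < t := ht
      have hre : ε ≤ w.re := by
        have := Complex.abs_re_le_norm (w - z)
        have h2 : ‖w - z‖ < ε := by
          simpa [Complex.dist_eq] using Metric.mem_ball.1 hw
        have h3 : |w.re - z.re| < ε := by
          calc |w.re - z.re| = |(w - z).re| := by simp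
          _ ≤ ‖w - z‖ := Complex.abs_re_le_norm _
          _ < ε := h2
        rw [abs_lt] at h3
        have : z.re - ε < w.re := by linarith [h3.1]
        simpa [hε] using by linarith [this]
      rw [norm_mul, norm_mul, Complex.norm_real, Complex.norm_exp,
        norm_neg, Complex.norm_real, Real.norm_eq_abs t]
      have h2 : (-(w * (t:ℂ))).re = -w.re * t := by simp [Complex.mul_re]
      rw [h2]
      have h1 : ‖t ^ (s - 1)‖ = t ^ (s - 1) := by
        rw [Real.norm_eq_abs, abs_of_nonneg (Real.rpow_nonneg htp.le _)]
      rw [h1, abs_of_nonneg htp.le]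
      have hts : t ^ (s - 1) * t = t ^ s := by
        rw [← Real.rpow_add_one htp.ne' (s - 1)]
        norm_num
      have hexp : Real.exp (-w.re * t) ≤ Real.exp (-ε * t) := by
        apply Real.exp_le_exp.2
        nlinarith
      calc t ^ (s - 1) * (Real.exp (-w.re * t) * t)
          = t ^ s * Real.exp (-w.re * t) := by rw [← hts]; ring
        _ ≤ t ^ s * Real.exp (-ε * t) := by
            apply mul_le_mul_of_nonneg_left hexp (Real.rpow_nonneg htp.le _)
    · have := integrableOn_rpow_mul_exp_neg_mul_rpow
        (show (-1:ℝ) < s by linarith) zero_lt_one hε0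
      exact (by simpa [Real.rpow_one] using this :
        IntegrableOn (fun t : ℝ => t ^ s * Real.exp (-ε * t)) (Ioi 0))
    · filter_upwards with t w _
      have h1 : HasDerivAt (fun w : ℂ => -(w * (t:ℂ))) (-(t:ℂ)) w := by
        exact (hasDerivAt_mul_const (x := w) (t:ℂ)).neg
      exact (h1.cexp).const_mul _
  -- equality on the real axis
  have hreal : ∀ r : ℝ, 0 < r → F r = G r := by
    intro r hr
    have h0 := Complex.integral_cpow_mul_exp_neg_mul_Ioi
      (show 0 < ((s:ℂ)).re by simpa using hs) hr
    have h1 : F r = ∫ t in Ioi (0:ℝ), (t:ℂ) ^ ((s:ℂ) - 1) * Complex.exp (-((r:ℝ) * t)) := by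
      apply setIntegral_congr_fun measurableSet_Ioi
      intro t ht
      have htp : (0:ℝ) < t := ht
      dsimp only
      rw [Complex.ofReal_cpow htp.le]
      push_cast
      ring_nf
    rw [h1, h0, hG]
    have harg : Complex.arg (r:ℂ) ≠ Real.pi := by
      rw [Complex.arg_ofReal_of_nonneg hr.le]
      exact Real.pi_ne_zero.symm
    rw [show (1/(r:ℂ)) = ((r:ℂ))⁻¹ by ring, Complex.inv_cpow _ _ harg,
      ← Complex.cpow_neg]
    ring
  -- frequently equal near 1
  have hfreq : ∃ᶠ w in 𝓝[≠] (1:ℂ), F w = G w := by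
    have hseq : Tendsto (fun k : ℕ => ((1 + ((k:ℝ)+1)⁻¹ : ℝ) : ℂ)) atTop (𝓝[≠] 1) := by
      apply tendsto_nhdsWithin_of_tendsto_nhds_of_eventually_within
      · have h1 : Tendsto (fun k : ℕ => (1 + ((k:ℝ)+1)⁻¹ : ℝ)) atTop (𝓝 1) := by
          have := tendsto_one_div_add_atTop_nhds_zero_nat (𝕜 := ℝ)
          simp only [one_div] at this
          simpa using this.const_add 1
        have h2 := (Complex.continuous_ofReal.tendsto 1).comp h1
        rw [show ((1:ℝ):ℂ) = 1 from Complex.ofReal_one] at h2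
        exact h2
      · filter_upwards with k
        simp only [mem_compl_iff, mem_singleton_iff]
        intro hcontra
        have : (1 + ((k:ℝ)+1)⁻¹ : ℝ) = 1 := by exact_mod_cast hcontra
        have hk : ((k:ℝ)+1)⁻¹ ≠ 0 := by positivity
        linarith [this, (by positivity : (0:ℝ) < ((k:ℝ)+1)⁻¹)]
    apply hseq.frequently
    apply Frequently.of_forall
    intro k
    exact hreal _ (by positivity)
  have hpre : IsPreconnected U := (convex_halfSpace_re_gt 0).isPreconnected
  have h1U : (1:ℂ) ∈ U := by simp [hU]
  exact hFA.eqOn_of_preconnected_of_frequently_eq hGA hpre h1U hfreq hB'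

lemma Hint {s : ℝ} (hs : 0 < s) {B : ℂ} (hB : 0 < B.re) :
    IntegrableOn (fun h : ℝ => ((h ^ (-s - 1) : ℝ) : ℂ) *
      Complex.exp (-(B * (((4 * h)⁻¹ : ℝ) : ℂ)))) (Ioi 0) ∧
    ∫ h in Ioi (0:ℝ), ((h ^ (-s - 1) : ℝ) : ℂ) * Complex.exp (-(B * (((4 * h)⁻¹ : ℝ) : ℂ)))
      = (((4:ℝ) ^ s : ℝ) : ℂ) * Complex.Gamma s * B ^ (-(s : ℂ)) := by
  set f : ℝ → ℂ := fun y => ((y ^ (s - 1) : ℝ) : ℂ) * Complex.exp (-(B * y)) with hf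
  set g : ℝ → ℂ := fun x => ((x ^ (-s - 1) : ℝ) : ℂ) * Complex.exp (-(B * ((x⁻¹ : ℝ) : ℂ)))
    with hg
  have hf_int : IntegrableOn f (Ioi 0) := GIint hs hB
  have heq1 : EqOn (fun x : ℝ => (|(-1:ℝ)| * x ^ ((-1:ℝ) - 1)) • f (x ^ (-1:ℝ))) g (Ioi 0) := by
    intro x hx
    have hxp : (0:ℝ) < x := hx
    dsimp only [hf, hg]
    rw [Real.rpow_neg_one x, abs_neg, abs_one, one_mul, Complex.real_smul,
      ← mul_assoc, ← Complex.ofReal_mul]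
    congr 2
    rw [Real.inv_rpow hxp.le, ← Real.rpow_neg hxp.le, ← Real.rpow_add hxp]
    ring_nf
  have hint1 : IntegrableOn g (Ioi 0) := by
    have h1 := (integrableOn_Ioi_comp_rpow_iff f (p := (-1:ℝ)) (by norm_num)).2 hf_int
    exact h1.congr_fun heq1 measurableSet_Ioi
  have hval1 : ∫ x in Ioi (0:ℝ), g x = Complex.Gamma s * B ^ (-(s:ℂ)) := by
    rw [← setIntegral_congr_fun measurableSet_Ioi heq1,
      integral_comp_rpow_Ioi f (by norm_num : (-1:ℝ) ≠ 0)]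
    exact GIval hs hB
  have heq2 : EqOn (fun h : ℝ => ((h ^ (-s - 1) : ℝ) : ℂ) *
      Complex.exp (-(B * (((4 * h)⁻¹ : ℝ) : ℂ))))
      (fun h : ℝ => ((4:ℝ) ^ (s + 1)) • g (4 * h)) (Ioi 0) := by
    intro h hh
    have hhp : (0:ℝ) < h := hh
    dsimp only [hg]
    rw [Complex.real_smul, ← mul_assoc, ← Complex.ofReal_mul]
    congr 2
    rw [Real.mul_rpow (by norm_num) hhp.le, ← mul_assoc, ← Real.rpow_add (by norm_num)]
    ring_nf
    norm_num
  have hint2 : IntegrableOn (fun h : ℝ => g (4 * h)) (Ioi 0) := by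
    refine (integrableOn_Ioi_comp_mul_left_iff g 0 (by norm_num : (0:ℝ) < 4)).2 ?_
    simpa using hint1
  constructor
  · have h5 : IntegrableOn (fun h : ℝ => ((4:ℝ) ^ (s + 1)) • g (4 * h)) (Ioi 0) :=
      hint2.smul ((4:ℝ) ^ (s + 1))
    exact IntegrableOn.congr_fun h5 heq2.symm measurableSet_Ioi
  · rw [setIntegral_congr_fun measurableSet_Ioi heq2, integral_smul,
      integral_comp_mul_left_Ioi g 0 (by norm_num : (0:ℝ) < 4)]
    rw [smul_smul, mul_zero, hval1]
    have h4 : (4:ℝ) ^ (s + 1) * 4⁻¹ = 4 ^ s := by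
      rw [Real.rpow_add (by norm_num), Real.rpow_one]; ring
    rw [h4, Complex.real_smul]
    ring

/-- the function `A`. -/
def Afun (c t l : ℝ) : ℂ := ((c * lcoth l : ℝ) : ℂ) - Complex.I * l * t

/-- the two-variable integrand. -/
def Ffun (n : ℕ) (c t : ℝ) (p : ℝ × ℝ) : ℂ :=
  (((2 * (4 * Real.pi) ^ (n + 1))⁻¹ * p.1 ^ (-((n:ℝ) + 1/2) - 1) : ℝ) : ℂ) *
    (Complex.exp (-(Afun c t p.2 * (((4 * p.1)⁻¹ : ℝ) : ℂ))) * ((lsinh p.2 : ℝ) : ℂ) ^ n)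

theorem stmt8 (n : ℕ) (hn : 1 ≤ n) (z : Fin n → ℂ) (t : ℝ) (hz : z ≠ 0) :
    IntegrableOn (fun h : ℝ => ((h ^ (-(1 : ℝ) / 2) : ℝ) : ℂ) * pheat n h z t)
      (Set.Ioi 0) volume ∧
    Integrable (fun l : ℝ => ((lsinh l : ℝ) : ℂ) ^ n *
      (((cnorm2 z * lcoth l : ℝ) : ℂ) - Complex.I * l * t) ^ (-(n : ℂ) - 1 / 2)) volume ∧
    ∫ h in Set.Ioi (0 : ℝ), ((h ^ (-(1 : ℝ) / 2) : ℝ) : ℂ) * pheat n h z t =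
      (Complex.Gamma ((n : ℂ) + 1 / 2) / (4 * (Real.pi : ℂ) ^ (n + 1))) *
        ∫ l : ℝ, ((lsinh l : ℝ) : ℂ) ^ n *
          (((cnorm2 z * lcoth l : ℝ) : ℂ) - Complex.I * l * t) ^ (-(n : ℂ) - 1 / 2) := by
  classical
  set c : ℝ := cnorm2 z with hc_def
  have hc : 0 < c := by
    obtain ⟨i, hi⟩ := Function.ne_iff.1 hz
    exact Finset.sum_pos' (fun j _ => Complex.normSq_nonneg _)
      ⟨i, Finset.mem_univ i, Complex.normSq_pos.2 hi⟩
  set s : ℝ := (n:ℝ) + 1/2 with hs_def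
  have hs : 0 < s := by positivity
  set Kc : ℝ := (2 * (4 * Real.pi) ^ (n + 1))⁻¹ with hKc_def
  have hKc : 0 < Kc := by rw [hKc_def]; positivity
  set μ : Measure ℝ := volume.restrict (Ioi (0:ℝ)) with hμ
  have hAre : ∀ l : ℝ, (Afun c t l).re = c * lcoth l := by
    intro l
    simp [Afun, Complex.sub_re, Complex.mul_re, Complex.mul_im]
  have hAc : ∀ l : ℝ, c ≤ (Afun c t l).re := by
    intro l
    rw [hAre l]
    nlinarith [one_le_lcoth l]
  have hApos : ∀ l : ℝ, 0 < (Afun c t l).re := fun l => lt_of_lt_of_le hc (hAc l)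
  -- measurability of the two-variable integrand
  have hFm : AEStronglyMeasurable (Ffun n c t) (μ.prod volume) := by
    apply Measurable.aestronglyMeasurable
    have m1 : Measurable (fun p : ℝ × ℝ =>
        (((2 * (4 * Real.pi) ^ (n + 1))⁻¹ * p.1 ^ (-((n:ℝ) + 1/2) - 1) : ℝ) : ℂ)) := by
      fun_prop
    have mA : Measurable (fun l : ℝ => Afun c t l) := by
      unfold Afun
      apply Measurable.sub
      · exact Complex.measurable_ofReal.comp (measurable_lcoth.const_mul c)
      · fun_prop
    have m2 : Measurable (fun p : ℝ × ℝ =>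
        Complex.exp (-(Afun c t p.2 * (((4 * p.1)⁻¹ : ℝ) : ℂ)))) := by
      apply Complex.measurable_exp.comp
      apply Measurable.neg
      exact (mA.comp measurable_snd).mul (by fun_prop)
    have m3 : Measurable (fun p : ℝ × ℝ => ((lsinh p.2 : ℝ) : ℂ) ^ n) :=
      (Complex.measurable_ofReal.comp (measurable_lsinh.comp measurable_snd)).pow_const n
    exact m1.mul (m2.mul m3)
  -- rewriting the h-slice
  have hfe : ∀ l : ℝ, (fun h : ℝ => Ffun n c t (h, l)) =
      fun h : ℝ => ((Kc * lsinh l ^ n : ℝ) : ℂ) *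
        (((h ^ (-s - 1) : ℝ) : ℂ) *
          Complex.exp (-(Afun c t l * (((4 * h)⁻¹ : ℝ) : ℂ)))) := by
    intro l
    funext h
    unfold Ffun
    rw [hs_def, hKc_def]
    push_cast
    ring
  have hIl : ∀ l : ℝ, Integrable (fun h => Ffun n c t (h, l)) μ := by
    intro l
    rw [hfe l]
    exact ((Hint hs (hApos l)).1).const_mul _
  -- value of the h-integral
  have hval : ∀ l : ℝ, (∫ h, Ffun n c t (h, l) ∂μ)
      = (Complex.Gamma ((n:ℂ) + 1/2) / (4 * (Real.pi:ℂ) ^ (n + 1))) *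
        (((lsinh l : ℝ) : ℂ) ^ n * (Afun c t l) ^ (-(n:ℂ) - 1/2)) := by
    intro l
    rw [hfe l, integral_const_mul, (Hint hs (hApos l)).2]
    have hsc : ((s:ℝ) : ℂ) = (n:ℂ) + 1/2 := by rw [hs_def]; push_cast; ring
    have hscn : (-((s:ℝ) : ℂ)) = -(n:ℂ) - 1/2 := by rw [hsc]; ring
    have hKreal : Kc * (4:ℝ) ^ s = (4 * Real.pi ^ (n + 1))⁻¹ := by
      have h2 : (4:ℝ) ^ s = 4 ^ (n:ℕ) * 2 := by
        rw [hs_def, Real.rpow_add (by norm_num), Real.rpow_natCast]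
        congr 1
        rw [show (4:ℝ) = 2 ^ (2:ℕ) by norm_num, ← Real.rpow_natCast (2:ℝ) 2,
          ← Real.rpow_mul (by norm_num)]
        norm_num
      rw [hKc_def, h2, mul_pow]
      have hpi := Real.pi_pos
      field_simp
      ring
    rw [hscn, hsc]
    have hcoef : ((Kc * lsinh l ^ n : ℝ) : ℂ) * ((((4:ℝ) ^ s : ℝ) : ℂ) *
        Complex.Gamma ((n:ℂ) + 1/2) * (Afun c t l) ^ (-(n:ℂ) - 1/2))
        = (((Kc * (4:ℝ) ^ s : ℝ)) : ℂ) * Complex.Gamma ((n:ℂ) + 1/2) *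
          (((lsinh l : ℝ) : ℂ) ^ n * (Afun c t l) ^ (-(n:ℂ) - 1/2)) := by
      push_cast
      ring
    rw [hcoef, hKreal]
    push_cast
    ring
  -- norm of the integrand
  have hFnorm : ∀ (l : ℝ) (h : ℝ), 0 < h → ‖Ffun n c t (h, l)‖ =
      Kc * h ^ (-s - 1) * (Real.exp (-((Afun c t l).re * (4 * h)⁻¹)) * lsinh l ^ n) := by
    intro l h hh
    rw [show Ffun n c t (h, l) = ((Kc * lsinh l ^ n : ℝ) : ℂ) *
      (((h ^ (-s - 1) : ℝ) : ℂ) *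
        Complex.exp (-(Afun c t l * (((4 * h)⁻¹ : ℝ) : ℂ)))) from congrFun (hfe l) h]
    rw [norm_mul, norm_mul, Complex.norm_real, Complex.norm_real,
      Complex.norm_exp]
    have e1 : (-(Afun c t l * (((4 * h)⁻¹ : ℝ) : ℂ))).re = -((Afun c t l).re * (4 * h)⁻¹) := by
      simp [Complex.mul_re]
    rw [e1]
    have hls : (0:ℝ) ≤ Kc * lsinh l ^ n :=
      mul_nonneg hKc.le (pow_nonneg (lsinh_pos l).le n)
    rw [Real.norm_eq_abs, Real.norm_eq_abs, abs_of_nonneg hls,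
      abs_of_nonneg (Real.rpow_nonneg hh.le _)]
    ring
  -- integrability of (l ↦ ∫ₕ ‖F‖)
  have hgc : IntegrableOn (fun h : ℝ => ((h ^ (-s - 1) : ℝ) : ℂ) *
      Complex.exp (-((c:ℂ) * (((4 * h)⁻¹ : ℝ) : ℂ)))) (Ioi 0) :=
    (Hint hs (show 0 < ((c:ℂ)).re by simpa using hc)).1
  set K₀ : ℝ := ∫ h, ‖((h ^ (-s - 1) : ℝ) : ℂ) *
      Complex.exp (-((c:ℂ) * (((4 * h)⁻¹ : ℝ) : ℂ)))‖ ∂μ with hK₀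
  have hK₀0 : 0 ≤ K₀ := integral_nonneg fun h => norm_nonneg _
  have hbound : ∀ l : ℝ, (∫ h, ‖Ffun n c t (h, l)‖ ∂μ) ≤ Kc * lsinh l ^ n * K₀ := by
    intro l
    have hmono : (fun h => ‖Ffun n c t (h, l)‖) ≤ᵐ[μ]
        fun h => Kc * lsinh l ^ n * ‖((h ^ (-s - 1) : ℝ) : ℂ) *
          Complex.exp (-((c:ℂ) * (((4 * h)⁻¹ : ℝ) : ℂ)))‖ := by
      rw [hμ]
      filter_upwards [self_mem_ae_restrict (measurableSet_Ioi : MeasurableSet (Ioi (0:ℝ)))]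
        with h hh
      have hhp : (0:ℝ) < h := hh
      rw [hFnorm l h hhp]
      have e2 : ‖((h ^ (-s - 1) : ℝ) : ℂ) *
          Complex.exp (-((c:ℂ) * (((4 * h)⁻¹ : ℝ) : ℂ)))‖
          = h ^ (-s - 1) * Real.exp (-(c * (4 * h)⁻¹)) := by
        rw [norm_mul, Complex.norm_real, Complex.norm_exp]
        have e3 : (-((c:ℂ) * (((4 * h)⁻¹ : ℝ) : ℂ))).re = -(c * (4 * h)⁻¹) := by
          simp [Complex.mul_re]
        rw [e3, Real.norm_eq_abs, abs_of_nonneg (Real.rpow_nonneg hhp.le _)]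
      rw [e2]
      have hexp : Real.exp (-((Afun c t l).re * (4 * h)⁻¹)) ≤ Real.exp (-(c * (4 * h)⁻¹)) := by
        apply Real.exp_le_exp.2
        have h4 : (0:ℝ) < (4 * h)⁻¹ := by positivity
        nlinarith [hAc l]
      have hnn : (0:ℝ) ≤ Kc * h ^ (-s - 1) * lsinh l ^ n :=
        mul_nonneg (mul_nonneg hKc.le (Real.rpow_nonneg hhp.le _)) (pow_nonneg (lsinh_pos l).le n)
      calc Kc * h ^ (-s - 1) * (Real.exp (-((Afun c t l).re * (4 * h)⁻¹)) * lsinh l ^ n)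
          = (Kc * h ^ (-s - 1) * lsinh l ^ n) * Real.exp (-((Afun c t l).re * (4 * h)⁻¹)) := by
            ring
        _ ≤ (Kc * h ^ (-s - 1) * lsinh l ^ n) * Real.exp (-(c * (4 * h)⁻¹)) :=
            mul_le_mul_of_nonneg_left hexp hnn
        _ = Kc * lsinh l ^ n * (h ^ (-s - 1) * Real.exp (-(c * (4 * h)⁻¹))) := by ring
    have h5 := integral_mono_ae ((hIl l).norm) ((hgc.norm).const_mul (Kc * lsinh l ^ n)) hmono
    rw [integral_const_mul] at h5
    exact h5
  have hnorm_int : Integrable (fun l : ℝ => ∫ h, ‖Ffun n c t (h, l)‖ ∂μ) volume := by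
    apply Integrable.mono' ((integrable_exp_half_abs.const_mul (Kc * 6 * K₀)))
    · exact (hFm.norm.prod_swap).integral_prod_right'
    · filter_upwards with l
      rw [Real.norm_eq_abs, abs_of_nonneg (integral_nonneg fun h => norm_nonneg _)]
      refine le_trans (hbound l) ?_
      have h6 : lsinh l ^ n ≤ lsinh l := by
        calc lsinh l ^ n ≤ lsinh l ^ 1 :=
          pow_le_pow_of_le_one (lsinh_pos l).le (lsinh_le_one l) hn
        _ = lsinh l := pow_one _
      have h7 : lsinh l ≤ 6 * Real.exp (-|l| / 2) := lsinh_le_exp l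
      calc Kc * lsinh l ^ n * K₀ = (Kc * K₀) * lsinh l ^ n := by ring
        _ ≤ (Kc * K₀) * (6 * Real.exp (-|l| / 2)) :=
          mul_le_mul_of_nonneg_left (h6.trans h7) (mul_nonneg hKc.le hK₀0)
        _ = Kc * 6 * K₀ * Real.exp (-|l| / 2) := by ring
  have hprod : Integrable (Ffun n c t) (μ.prod volume) := by
    rw [integrable_prod_iff' hFm]
    exact ⟨ae_of_all _ hIl, hnorm_int⟩
  -- pointwise identity on Ioi 0
  have hpt : ∀ h ∈ Ioi (0:ℝ), ((h ^ (-(1:ℝ)/2) : ℝ) : ℂ) * pheat n h z t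
      = ∫ l, Ffun n c t (h, l) := by
    intro h hh
    have hhp : (0:ℝ) < h := hh
    have h1 : (fun l : ℝ => Ffun n c t (h, l)) = fun l : ℝ =>
        ((Kc * h ^ (-s - 1) : ℝ) : ℂ) *
          (Complex.exp (((4 * h : ℝ) : ℂ)⁻¹ *
            (Complex.I * l * t - ((c * lcoth l : ℝ) : ℂ))) * ((lsinh l : ℝ) : ℂ) ^ n) := by
      funext l
      unfold Ffun
      rw [show -(Afun c t l * (((4 * h)⁻¹ : ℝ) : ℂ)) = ((4 * h : ℝ) : ℂ)⁻¹ *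
        (Complex.I * l * t - ((c * lcoth l : ℝ) : ℂ)) from by unfold Afun; push_cast; ring]
    rw [h1, integral_const_mul]
    unfold pheat
    rw [← hc_def, ← mul_assoc]
    congr 1
    rw [← Complex.ofReal_inv, ← Complex.ofReal_mul, Complex.ofReal_inj]
    have e1 : h ^ (-s - 1) = h ^ (-(1:ℝ)/2) * (h ^ (n + 1))⁻¹ := by
      rw [show -s - 1 = (-(1:ℝ)/2) + (-((n + 1 : ℕ) : ℝ)) by rw [hs_def]; push_cast; ring,
        Real.rpow_add hhp, Real.rpow_neg hhp.le, Real.rpow_natCast]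
    rw [hKc_def, e1, mul_pow (4 * Real.pi) h (n + 1), mul_inv, mul_inv]
    ring
  -- claim 1
  have claim1 : IntegrableOn (fun h : ℝ => ((h ^ (-(1:ℝ)/2) : ℝ) : ℂ) * pheat n h z t)
      (Ioi 0) volume := by
    have h5 := hprod.integral_prod_left
    exact IntegrableOn.congr_fun h5 (fun h hh => (hpt h hh).symm) measurableSet_Ioi
  -- claim 2
  set Cst : ℂ := Complex.Gamma ((n:ℂ) + 1/2) / (4 * (Real.pi:ℂ) ^ (n + 1)) with hCst
  have hC0 : Cst ≠ 0 := by
    apply div_ne_zero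
    · exact Complex.Gamma_ne_zero_of_re_pos (by
        simp only [Complex.add_re, Complex.natCast_re]
        norm_num
        positivity)
    · exact mul_ne_zero (by norm_num) (pow_ne_zero _ (by
        simpa using Real.pi_ne_zero))
  have claim2 : Integrable (fun l : ℝ => ((lsinh l : ℝ) : ℂ) ^ n *
      (Afun c t l) ^ (-(n:ℂ) - 1/2)) volume := by
    have h6 := hprod.integral_prod_right
    have h7 : (fun l : ℝ => ∫ h, Ffun n c t (h, l) ∂μ) =
        fun l : ℝ => Cst * (((lsinh l : ℝ) : ℂ) ^ n * (Afun c t l) ^ (-(n:ℂ) - 1/2)) := by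
      funext l
      exact hval l
    rw [h7] at h6
    have h8 := h6.const_mul Cst⁻¹
    have h9 : (fun l : ℝ => Cst⁻¹ * (Cst * (((lsinh l : ℝ) : ℂ) ^ n *
        (Afun c t l) ^ (-(n:ℂ) - 1/2)))) =
        fun l : ℝ => ((lsinh l : ℝ) : ℂ) ^ n * (Afun c t l) ^ (-(n:ℂ) - 1/2) := by
      funext l
      rw [← mul_assoc, inv_mul_cancel₀ hC0, one_mul]
    rwa [h9] at h8
  -- claim 3
  have claim3 : ∫ h in Ioi (0:ℝ), ((h ^ (-(1:ℝ)/2) : ℝ) : ℂ) * pheat n h z t =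
      Cst * ∫ l : ℝ, ((lsinh l : ℝ) : ℂ) ^ n * (Afun c t l) ^ (-(n:ℂ) - 1/2) := by
    rw [setIntegral_congr_fun measurableSet_Ioi hpt]
    have hswap := integral_integral_swap (f := fun (h l : ℝ) => Ffun n c t (h, l))
      (μ := μ) (ν := volume) hprod
    rw [hμ] at hswap
    rw [hswap]
    rw [show (fun l : ℝ => ∫ h, Ffun n c t (h, l) ∂μ) =
        fun l : ℝ => Cst * (((lsinh l : ℝ) : ℂ) ^ n * (Afun c t l) ^ (-(n:ℂ) - 1/2)) from
      funext fun l => hval l]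
    rw [integral_const_mul]
  exact ⟨claim1, claim2, claim3⟩
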